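/- Let N, d be positive integers and let U, V₁, V₂ be unitary matrices indexed by Fin N × Fin d. Suppose that for every X : Matrix (Fin N) (Fin N) ℂ, V₁ᴴ * (X ⊗ 1) * V₁ = Uᴴ * (X ⊗ 1) * U and V₂ᴴ * (X ⊗ 1) * V₂ = Uᴴ * (X ⊗ 1) * U, and that every block V₁(e_i, e_j) and every block V₂(e_i, e_j) (slices over the standard basis of ℂ^N) belongs to A_r(U). Then there exists a unitary W ∈ A_r(U) (a d × d matrix) such that V₁ * V₂ᴴ = 1 ⊗ W; in particular V₁V₂ᴴ ∈ I ⊗ A_r(U). -/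

import Mathlib

open scoped Kronecker
open Matrix

/-- The slice `M(f,g)` of an operator on `ℂ^N ⊗ ℂ^d`: the partial trace `Tr_{|g⟩⟨f|}[M]`,
given by `M(f,g) k l = ∑ i j, conj (f i) * g j * M (i,k) (j,l)`. -/
noncomputable def envSlice {N d : ℕ} (M : Matrix (Fin N × Fin d) (Fin N × Fin d) ℂ)
    (f g : Fin N → ℂ) : Matrix (Fin d) (Fin d) ℂ :=
  Matrix.of fun k l => ∑ i, ∑ j, (starRingEnd ℂ) (f i) * g j * M (i, k) (j, l)

/-- The Environment Algebra `A(U)`: the unital star-subalgebra generated by all slices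
`U(f,g)` and `Uᴴ(f,g)`. -/
noncomputable def envAlg {N d : ℕ} (U : Matrix (Fin N × Fin d) (Fin N × Fin d) ℂ) :
    StarSubalgebra ℂ (Matrix (Fin d) (Fin d) ℂ) :=
  StarAlgebra.adjoin ℂ
    ({A | ∃ f g, A = envSlice U f g} ∪ {A | ∃ f g, A = envSlice Uᴴ f g})

/-- The Environment Right-Action Algebra `A_r(U)`: the unital star-subalgebra generated by all
products `Uᴴ(f₁,g₁) * U(f₂,g₂)`. -/
noncomputable def envActAlg {N d : ℕ} (U : Matrix (Fin N × Fin d) (Fin N × Fin d) ℂ) :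
    StarSubalgebra ℂ (Matrix (Fin d) (Fin d) ℂ) :=
  StarAlgebra.adjoin ℂ
    {A | ∃ f₁ g₁ f₂ g₂, A = envSlice Uᴴ f₁ g₁ * envSlice U f₂ g₂}

/- ### Auxiliary lemmas -/

lemma envSlice_conjT {N d : ℕ} (M : Matrix (Fin N × Fin d) (Fin N × Fin d) ℂ)
    (f g : Fin N → ℂ) : envSlice Mᴴ g f = (envSlice M f g)ᴴ := by
  ext k l
  simp only [envSlice, Matrix.of_apply, Matrix.conjTranspose_apply, star_sum, star_mul',
    Complex.star_def, Complex.conj_conj]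
  rw [Finset.sum_comm]
  refine Finset.sum_congr rfl fun i _ => Finset.sum_congr rfl fun j _ => by ring

lemma envSlice_single_right {N d : ℕ} (A : Matrix (Fin N × Fin d) (Fin N × Fin d) ℂ)
    (f : Fin N → ℂ) (m : Fin N) (k p : Fin d) :
    envSlice A f (Pi.single m 1) k p = ∑ i, (starRingEnd ℂ) (f i) * A (i, k) (m, p) := by
  simp [envSlice, Pi.single_apply, mul_ite, ite_mul, Finset.sum_ite_eq']

lemma envSlice_single_left {N d : ℕ} (B : Matrix (Fin N × Fin d) (Fin N × Fin d) ℂ)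
    (g : Fin N → ℂ) (m : Fin N) (p l : Fin d) :
    envSlice B (Pi.single m 1) g p l = ∑ j, g j * B (m, p) (j, l) := by
  simp [envSlice, Pi.single_apply, apply_ite (starRingEnd ℂ), ite_mul, Finset.sum_ite_eq]

lemma envSlice_mul {N d : ℕ} (A B : Matrix (Fin N × Fin d) (Fin N × Fin d) ℂ)
    (f g : Fin N → ℂ) :
    envSlice (A * B) f g = ∑ m, envSlice A f (Pi.single m 1) * envSlice B (Pi.single m 1) g := by
  ext k l
  have rhs : (∑ m, envSlice A f (Pi.single m 1) * envSlice B (Pi.single m 1) g) k l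
      = ∑ m, ∑ p, ∑ i, ∑ j,
        (starRingEnd ℂ) (f i) * A (i, k) (m, p) * (g j * B (m, p) (j, l)) := by
    simp only [Matrix.sum_apply, Matrix.mul_apply, envSlice_single_right, envSlice_single_left,
      Finset.sum_mul_sum]
  rw [rhs]
  simp only [envSlice, Matrix.of_apply, Matrix.mul_apply, Fintype.sum_prod_type,
    Finset.mul_sum]
  conv_lhs => enter [2, i]; rw [Finset.sum_comm]; enter [2, m]; rw [Finset.sum_comm]
  rw [Finset.sum_comm]
  conv_lhs => enter [2, m]; rw [Finset.sum_comm]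
  refine Finset.sum_congr rfl fun m _ => Finset.sum_congr rfl fun p _ =>
    Finset.sum_congr rfl fun i _ => Finset.sum_congr rfl fun j _ => by ring

lemma key_commutant {N d : ℕ} (T : Matrix (Fin N × Fin d) (Fin N × Fin d) ℂ)
    (hcomm : ∀ X : Matrix (Fin N) (Fin N) ℂ,
      (X ⊗ₖ (1 : Matrix (Fin d) (Fin d) ℂ)) * T = T * (X ⊗ₖ (1 : Matrix (Fin d) (Fin d) ℂ)))
    (k l : Fin d) (a b i j : Fin N) :
    (if i = a then T (b, k) (j, l) else 0) = (if j = b then T (i, k) (a, l) else 0) := by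
  have h := congrFun (congrFun (hcomm (Matrix.single a b 1)) (i, k)) (j, l)
  simp only [Matrix.mul_apply, Matrix.kroneckerMap_apply, Matrix.single,
    Matrix.one_apply, Matrix.of_apply, Fintype.sum_prod_type, ite_mul, one_mul, zero_mul,
    mul_ite, mul_one, mul_zero, Finset.sum_ite_eq', Finset.sum_ite_eq, Finset.mem_univ,
    if_true, ite_and] at h
  by_cases hai : a = i <;> by_cases hbj : b = j <;>
    simp [hai, hbj, eq_comm] at h ⊢ <;> simp_all

/-- two representatives `V₁, V₂` of the action of `U`, both lying in
`B(H) ⊗ A_r(U)`, differ by a unitary `W ∈ A_r(U)`: `V₁ V₂ᴴ = 1 ⊗ W`. -/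
theorem representatives_differ_by_unitary_in_envActAlg (N d : ℕ) (hN : 0 < N) (hd : 0 < d)
    (U V₁ V₂ : Matrix (Fin N × Fin d) (Fin N × Fin d) ℂ)
    (hU : Uᴴ * U = 1) (hU' : U * Uᴴ = 1)
    (hV₁ : V₁ᴴ * V₁ = 1) (hV₁' : V₁ * V₁ᴴ = 1)
    (hV₂ : V₂ᴴ * V₂ = 1) (hV₂' : V₂ * V₂ᴴ = 1)
    (hact₁ : ∀ X : Matrix (Fin N) (Fin N) ℂ,
      V₁ᴴ * (X ⊗ₖ (1 : Matrix (Fin d) (Fin d) ℂ)) * V₁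
        = Uᴴ * (X ⊗ₖ (1 : Matrix (Fin d) (Fin d) ℂ)) * U)
    (hact₂ : ∀ X : Matrix (Fin N) (Fin N) ℂ,
      V₂ᴴ * (X ⊗ₖ (1 : Matrix (Fin d) (Fin d) ℂ)) * V₂
        = Uᴴ * (X ⊗ₖ (1 : Matrix (Fin d) (Fin d) ℂ)) * U)
    (hblk₁ : ∀ i j : Fin N, envSlice V₁ (Pi.single i 1) (Pi.single j 1) ∈ envActAlg U)
    (hblk₂ : ∀ i j : Fin N, envSlice V₂ (Pi.single i 1) (Pi.single j 1) ∈ envActAlg U) :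
    ∃ W : Matrix (Fin d) (Fin d) ℂ, W ∈ envActAlg U ∧ Wᴴ * W = 1 ∧ W * Wᴴ = 1 ∧
      V₁ * V₂ᴴ = (1 : Matrix (Fin N) (Fin N) ℂ) ⊗ₖ W := by
  set T : Matrix (Fin N × Fin d) (Fin N × Fin d) ℂ := V₁ * V₂ᴴ with hTdef
  set i0 : Fin N := ⟨0, hN⟩
  -- T commutes with X ⊗ 1
  have hcomm : ∀ X : Matrix (Fin N) (Fin N) ℂ,
      (X ⊗ₖ (1 : Matrix (Fin d) (Fin d) ℂ)) * T = T * (X ⊗ₖ (1 : Matrix (Fin d) (Fin d) ℂ)) := by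
    intro X
    have h : V₁ᴴ * (X ⊗ₖ (1 : Matrix (Fin d) (Fin d) ℂ)) * V₁
        = V₂ᴴ * (X ⊗ₖ (1 : Matrix (Fin d) (Fin d) ℂ)) * V₂ := (hact₁ X).trans (hact₂ X).symm
    calc (X ⊗ₖ (1 : Matrix (Fin d) (Fin d) ℂ)) * (V₁ * V₂ᴴ)
        = (V₁ * V₁ᴴ) * (X ⊗ₖ (1 : Matrix (Fin d) (Fin d) ℂ)) * (V₁ * V₂ᴴ) := by
          rw [hV₁', one_mul]
      _ = V₁ * (V₁ᴴ * (X ⊗ₖ (1 : Matrix (Fin d) (Fin d) ℂ)) * V₁) * V₂ᴴ := by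
          simp only [mul_assoc]
      _ = V₁ * (V₂ᴴ * (X ⊗ₖ (1 : Matrix (Fin d) (Fin d) ℂ)) * V₂) * V₂ᴴ := by rw [h]
      _ = (V₁ * V₂ᴴ) * (X ⊗ₖ (1 : Matrix (Fin d) (Fin d) ℂ)) * (V₂ * V₂ᴴ) := by
          simp only [mul_assoc]
      _ = _ := by rw [hV₂', mul_one]
  -- the commutant structure: T = 1 ⊗ W
  set W : Matrix (Fin d) (Fin d) ℂ := Matrix.of fun k l => T (i0, k) (i0, l) with hWdef
  have hstruct : ∀ (i j : Fin N) (k l : Fin d),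
      T (i, k) (j, l) = if i = j then W k l else 0 := by
    intro i j k l
    have h1 := key_commutant T hcomm k l i i i j
    have h2 := key_commutant T hcomm k l i i0 i i0
    simp only [if_true] at h1 h2
    rw [h1]
    rcases eq_or_ne i j with hij | hij
    · subst hij; simp [hWdef, ← h2]
    · rw [if_neg (Ne.symm hij), if_neg hij]
  have hT : T = (1 : Matrix (Fin N) (Fin N) ℂ) ⊗ₖ W := by
    ext ⟨i, k⟩ ⟨j, l⟩
    rw [hstruct i j k l]
    simp [Matrix.kroneckerMap_apply, Matrix.one_apply, ite_mul]
  -- membership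
  have hslice : envSlice T (Pi.single i0 1) (Pi.single i0 1) = W := by
    ext k l
    rw [envSlice_single_right]
    simp [Pi.single_apply, apply_ite (starRingEnd ℂ), ite_mul, Finset.sum_ite_eq, hWdef]
  have hWmem : W ∈ envActAlg U := by
    rw [← hslice, hTdef, envSlice_mul]
    refine sum_mem fun m _ => mul_mem (hblk₁ i0 m) ?_
    rw [envSlice_conjT]
    exact star_mem (hblk₂ i0 m)
  -- unitarity
  have hTT : Tᴴ * T = 1 := by
    rw [hTdef, conjTranspose_mul, conjTranspose_conjTranspose, mul_assoc,
      ← mul_assoc V₁ᴴ, hV₁, one_mul, hV₂']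
  have hTT' : T * Tᴴ = 1 := by
    rw [hTdef, conjTranspose_mul, conjTranspose_conjTranspose, mul_assoc,
      ← mul_assoc V₂ᴴ, hV₂, one_mul, hV₁']
  have hkb : ∀ A : Matrix (Fin d) (Fin d) ℂ,
      ((1 : Matrix (Fin N) (Fin N) ℂ) ⊗ₖ A)ᴴ = (1 : Matrix (Fin N) (Fin N) ℂ) ⊗ₖ Aᴴ := by
    intro A
    ext ⟨i, k⟩ ⟨j, l⟩
    simp [Matrix.conjTranspose_apply, Matrix.kroneckerMap_apply, Matrix.one_apply,
      apply_ite star, eq_comm]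
  have hext : ∀ A : Matrix (Fin d) (Fin d) ℂ,
      (1 : Matrix (Fin N) (Fin N) ℂ) ⊗ₖ A = 1 → A = 1 := by
    intro A hA
    ext k l
    have := congrFun (congrFun hA (i0, k)) (i0, l)
    simpa [Matrix.kroneckerMap_apply, Matrix.one_apply, Prod.ext_iff] using this
  have hWW : Wᴴ * W = 1 := by
    have h := hTT
    rw [hT, hkb, ← Matrix.mul_kronecker_mul, one_mul] at h
    exact hext _ h
  have hWW' : W * Wᴴ = 1 := by
    have h := hTT'
    rw [hT, hkb, ← Matrix.mul_kronecker_mul, one_mul] at h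
    exact hext _ h
  exact ⟨W, hWmem, hWW, hWW', hT⟩
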